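/- arXiv:1406.1684 — 3 statements merged into one kernel-verified Lean document; each statement's English description precedes it below -/
import Mathlib

section
/- Let p ∈ (1,2] and let p' = p/(p−1) be its conjugate exponent. Let F : ℝ → ℝ be differentiable and bounded from below, and suppose there exists c₃ > 0 such that |F'(s)|^p ≤ c₃(|F(s)| + 1) for all s ∈ ℝ. Then there exist constants c₄ > 0 and c₅ ≥ 0 such that |F(s)| ≤ c₄|s|^{p'} + c₅ for all s ∈ ℝ. -/
/-- If `p ∈ (1,2]`, `F : ℝ → ℝ` is differentiable with derivative `F'`, bounded from
below, and `|F'(s)|^p ≤ c₃(|F(s)| + 1)` for all `s` (assumption (H4)), then `F` has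
polynomial growth of order `p' = p/(p-1)`: there are `c₄ > 0` and `c₅ ≥ 0` with
`|F(s)| ≤ c₄ |s|^{p'} + c₅` for all `s`. -/
theorem stmt_1 (p : ℝ) (hp1 : 1 < p) (hp2 : p ≤ 2) (F F' : ℝ → ℝ)
    (hF : ∀ s : ℝ, HasDerivAt F (F' s) s)
    (hbdd : BddBelow (Set.range F))
    (c₃ : ℝ) (hc₃ : 0 < c₃)
    (hH4 : ∀ s : ℝ, |F' s| ^ p ≤ c₃ * (|F s| + 1)) :
    ∃ c₄ > (0 : ℝ), ∃ c₅ ≥ (0 : ℝ), ∀ s : ℝ,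
      |F s| ≤ c₄ * |s| ^ (p / (p - 1)) + c₅ := by
  obtain ⟨m, hm⟩ := hbdd
  have hmF : ∀ x, m ≤ F x := fun x => hm ⟨x, rfl⟩
  set B : ℝ := 2 * |m| + 1 with hB
  set u : ℝ → ℝ := fun s => F s + B with hu
  have hmabs : ∀ x, -|m| ≤ F x := fun x => le_trans (neg_abs_le m) (hmF x)
  have hu1 : ∀ s, 1 ≤ u s := by
    intro s
    have := hmabs s
    simp only [hu, hB]
    nlinarith [abs_nonneg m]
  have huF : ∀ s, |F s| + 1 ≤ u s := by
    intro s
    have := hmabs s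
    rcases abs_cases (F s) with ⟨h1, h2⟩ | ⟨h1, h2⟩ <;>
      simp only [hu, hB, h1] <;> nlinarith [abs_nonneg m]
  have hp0 : (0:ℝ) < p := lt_trans one_pos hp1
  have hp1' : (0:ℝ) < p - 1 := by linarith
  set q : ℝ := (p - 1) / p with hq
  have hq0 : 0 < q := div_pos hp1' hp0
  have hqinv : q⁻¹ = p / (p - 1) := by rw [hq]; field_simp
  set K : ℝ := q * c₃ ^ (1 / p) with hK
  have hK0 : 0 < K := mul_pos hq0 (Real.rpow_pos_of_pos hc₃ _)
  set v : ℝ → ℝ := fun s => u s ^ q with hv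
  have hupos : ∀ s, 0 < u s := fun s => lt_of_lt_of_le one_pos (hu1 s)
  have hvderiv : ∀ s, HasDerivAt v (F' s * q * u s ^ (q - 1)) s := by
    intro s
    exact ((hF s).add_const B).rpow_const (Or.inl (ne_of_gt (hupos s)))
  have hvbound : ∀ s, |F' s * q * u s ^ (q - 1)| ≤ K := by
    intro s
    have hF'le : |F' s| ≤ c₃ ^ (1 / p) * u s ^ (1 / p) := by
      have h2 : |F' s| ^ p ≤ c₃ * u s :=
        le_trans (hH4 s) (by nlinarith [huF s, hc₃.le])
      have h3 := Real.rpow_le_rpow (by positivity) h2 (by positivity : (0:ℝ) ≤ 1 / p)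
      rwa [one_div, Real.rpow_rpow_inv (abs_nonneg _) (ne_of_gt hp0),
        Real.mul_rpow hc₃.le (hupos s).le, ← one_div] at h3
    have habs : |F' s * q * u s ^ (q - 1)| = |F' s| * q * u s ^ (q - 1) := by
      rw [abs_mul, abs_mul, abs_of_pos hq0,
        abs_of_pos (Real.rpow_pos_of_pos (hupos s) _)]
    rw [habs]
    have hmono : |F' s| * q * u s ^ (q - 1) ≤
        (c₃ ^ (1 / p) * u s ^ (1 / p)) * q * u s ^ (q - 1) := by
      have h1 : 0 < u s ^ (q - 1) := Real.rpow_pos_of_pos (hupos s) _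
      exact mul_le_mul_of_nonneg_right (mul_le_mul_of_nonneg_right hF'le hq0.le) h1.le
    refine le_trans hmono (le_of_eq ?_)
    have hcomb : u s ^ (1 / p) * u s ^ (q - 1) = 1 := by
      rw [← Real.rpow_add (hupos s)]
      have : 1 / p + (q - 1) = 0 := by rw [hq]; field_simp; ring
      rw [this, Real.rpow_zero]
    calc c₃ ^ (1 / p) * u s ^ (1 / p) * q * u s ^ (q - 1)
        = q * c₃ ^ (1 / p) * (u s ^ (1 / p) * u s ^ (q - 1)) := by ring
      _ = K := by rw [hcomb, hK]; ring
  have hlip : ∀ s : ℝ, |v s - v 0| ≤ K * |s| := by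
    intro s
    have := convex_univ.norm_image_sub_le_of_norm_hasDerivWithin_le
      (f := v) (f' := fun s => F' s * q * u s ^ (q - 1)) (C := K)
      (fun x _ => (hvderiv x).hasDerivWithinAt) (fun x _ => hvbound x)
      (Set.mem_univ 0) (Set.mem_univ s)
    simpa using this
  have hv0 : 0 ≤ v 0 := (Real.rpow_pos_of_pos (hupos 0) q).le
  have hvle : ∀ s, v s ≤ v 0 + K * |s| := fun s => by
    have := (abs_le.mp (hlip s)).2; linarith
  have hule : ∀ s, u s ≤ (v 0 + K * |s|) ^ q⁻¹ := by
    intro s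
    have h1 : u s = v s ^ q⁻¹ := by
      rw [hv]
      rw [← Real.rpow_mul (hupos s).le, mul_inv_cancel₀ (ne_of_gt hq0), Real.rpow_one]
    rw [h1]
    exact Real.rpow_le_rpow (Real.rpow_pos_of_pos (hupos s) q).le (hvle s) (by positivity)
  have hsplit : ∀ a b : ℝ, 0 ≤ a → 0 ≤ b →
      (a + b) ^ q⁻¹ ≤ 2 ^ q⁻¹ * (a ^ q⁻¹ + b ^ q⁻¹) := by
    intro a b ha hb
    have h1 : a + b ≤ 2 * max a b := by
      rcases le_total a b with h | h
      · rw [max_eq_right h]; linarith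
      · rw [max_eq_left h]; linarith
    have h2 : (max a b) ^ q⁻¹ ≤ a ^ q⁻¹ + b ^ q⁻¹ := by
      rcases le_total a b with h | h
      · rw [max_eq_right h]
        have : (0:ℝ) ≤ a ^ q⁻¹ := Real.rpow_nonneg ha _
        linarith
      · rw [max_eq_left h]
        have : (0:ℝ) ≤ b ^ q⁻¹ := Real.rpow_nonneg hb _
        linarith
    calc (a + b) ^ q⁻¹ ≤ (2 * max a b) ^ q⁻¹ :=
          Real.rpow_le_rpow (by positivity) h1 (by positivity)
      _ = 2 ^ q⁻¹ * (max a b) ^ q⁻¹ :=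
          Real.mul_rpow (by norm_num) (le_max_of_le_left ha)
      _ ≤ 2 ^ q⁻¹ * (a ^ q⁻¹ + b ^ q⁻¹) := by
          have h2pos : (0:ℝ) ≤ (2:ℝ) ^ q⁻¹ := Real.rpow_nonneg (by norm_num) _
          nlinarith
  refine ⟨2 ^ q⁻¹ * K ^ q⁻¹, by positivity, 2 ^ q⁻¹ * v 0 ^ q⁻¹, by positivity,
    fun s => ?_⟩
  rw [← hqinv]
  have h1 := hule s
  have h2 := hsplit (v 0) (K * |s|) hv0 (by positivity)
  have h3 : (K * |s|) ^ q⁻¹ = K ^ q⁻¹ * |s| ^ q⁻¹ :=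
    Real.mul_rpow hK0.le (abs_nonneg s)
  have h4 := huF s
  rw [h3] at h2
  have h5 : 2 ^ q⁻¹ * (v 0 ^ q⁻¹ + K ^ q⁻¹ * |s| ^ q⁻¹)
      = 2 ^ q⁻¹ * K ^ q⁻¹ * |s| ^ q⁻¹ + 2 ^ q⁻¹ * v 0 ^ q⁻¹ := by ring
  have hA : |F s| ≤ u s := by linarith
  exact hA.trans (h1.trans (h2.trans (le_of_eq h5)))
end

section
/- Let d ≥ 1, let Ω ⊆ ℝ^d be a measurable set of finite Lebesgue measure, let J ∈ L¹(ℝ^d) satisfy J(x) = J(−x) for a.e. x, and suppose a(x) := ∫_Ω J(x − y) dy ≥ 0 for a.e. x ∈ Ω. Let F : ℝ → ℝ be measurable and suppose there are constants c₁ > (1/2)‖J‖_{L¹(ℝ^d)} and c₂ ∈ ℝ with F(s) ≥ c₁s² − c₂ for all s ∈ ℝ. Then there exist constants α > 0 and c ≥ 0, depending only on c₁, c₂, ‖J‖_{L¹(ℝ^d)} and the measure of Ω, such that for every φ ∈ L²(Ω) with F∘φ ∈ L¹(Ω): ∫_Ω a(x)φ(x)² dx + 2∫_Ω F(φ(x))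 dx − ∫_Ω ∫_Ω J(x − y)φ(x)φ(y) dx dy ≥ α(‖φ‖²_{L²(Ω)} + ∫_Ω F(φ(x)) dx) − c. -/
open MeasureTheory

set_option maxHeartbeats 1000000 in
/-- Coercivity of the nonlocal free energy (estimate (stima5)): if `Ω ⊆ ℝ^d` has
finite Lebesgue measure, `J ∈ L¹(ℝ^d)` is even a.e. with `a(x) := ∫_Ω J(x-y) dy ≥ 0`
a.e. on `Ω` (assumption (H1)), `F` is measurable with `F(s) ≥ c₁ s² - c₂` where
`c₁ > (1/2)‖J‖_{L¹}` (assumption (H3)), then there are `α > 0` and `c ≥ 0` such that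
for every `φ ∈ L²(Ω)` with `F ∘ φ ∈ L¹(Ω)`:
`∫_Ω a φ² + 2 ∫_Ω F(φ) - ∫_Ω∫_Ω J(x-y) φ(x) φ(y) ≥ α (‖φ‖²_{L²} + ∫_Ω F(φ)) - c`. -/
theorem stmt_14 (d : ℕ) (hd : 1 ≤ d) (Ω : Set (Fin d → ℝ)) (hΩ : MeasurableSet Ω)
    (hΩfin : volume Ω < ⊤)
    (J : (Fin d → ℝ) → ℝ) (hJ : Integrable J volume)
    (hJeven : ∀ᵐ x : (Fin d → ℝ) ∂volume, J (-x) = J x)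
    (ha : ∀ᵐ x ∂(volume.restrict Ω), 0 ≤ ∫ y in Ω, J (x - y))
    (F : ℝ → ℝ) (hFmeas : Measurable F)
    (c₁ c₂ : ℝ) (hc₁ : (1 / 2 : ℝ) * ∫ z, |J z| < c₁)
    (hH3 : ∀ s : ℝ, F s ≥ c₁ * s ^ 2 - c₂) :
    ∃ α > (0 : ℝ), ∃ c ≥ (0 : ℝ),
      ∀ φ : (Fin d → ℝ) → ℝ, MemLp φ 2 (volume.restrict Ω) →
        Integrable (fun x => F (φ x)) (volume.restrict Ω) →
        (∫ x in Ω, (∫ y in Ω, J (x - y)) * φ x ^ 2) + 2 * (∫ x in Ω, F (φ x)) -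
            (∫ x in Ω, ∫ y in Ω, J (x - y) * φ x * φ y) ≥
          α * ((∫ x in Ω, φ x ^ 2) + ∫ x in Ω, F (φ x)) - c := by
  set K : ℝ := ∫ z, |J z| with hKdef
  have hK0 : 0 ≤ K := integral_nonneg fun z => abs_nonneg _
  have hc₁pos : 0 < c₁ := lt_of_le_of_lt (by positivity) hc₁
  set V : ℝ := (volume Ω).toReal with hVdef
  have hV0 : 0 ≤ V := ENNReal.toReal_nonneg
  set α : ℝ := (2 * c₁ - K) / (1 + c₁) with hαdef'
  have hα0 : 0 < α := div_pos (by linarith) (by linarith)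
  have hαdef : α * (1 + c₁) = 2 * c₁ - K := div_mul_cancel₀ _ (by linarith)
  have hkey : (2 - α) * c₁ = α + K := by linear_combination -hαdef
  have hα2 : α ≤ 2 := by nlinarith
  set c : ℝ := max 0 ((2 - α) * (c₂ * V)) with hcdef
  have hc0 : 0 ≤ c := le_max_left _ _
  have hcge : (2 - α) * (c₂ * V) ≤ c := le_max_right _ _
  refine ⟨α, hα0, c, hc0, ?_⟩
  intro φ hφ2 hFφ
  set μ : Measure (Fin d → ℝ) := volume.restrict Ω with hμdef
  haveI : IsFiniteMeasure μ := ⟨by rw [Measure.restrict_apply_univ]; exact hΩfin⟩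
  -- measurable representative
  obtain ⟨ψ, hψm, hφψ⟩ : ∃ ψ : (Fin d → ℝ) → ℝ, StronglyMeasurable ψ ∧ φ =ᵐ[μ] ψ :=
    ⟨hφ2.1.mk φ, hφ2.1.stronglyMeasurable_mk, hφ2.1.ae_eq_mk⟩
  have hψ2 : MemLp ψ 2 μ := hφ2.ae_eq hφψ
  have hψsq : Integrable (fun x => ψ x ^ 2) μ := hψ2.integrable_sq
  set S : ℝ := ∫ x in Ω, ψ x ^ 2 with hSdef
  have hS0 : 0 ≤ S := integral_nonneg fun x => sq_nonneg _
  have hSφ : (∫ x in Ω, φ x ^ 2) = S :=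
    integral_congr_ae (hφψ.mono fun x hx => by simp only [hx])
  -- translation bounds on J
  have habs : Integrable (fun z => |J z|) volume := hJ.abs
  have hJxint : ∀ x, Integrable (fun y => |J (x - y)|) μ := fun x =>
    (habs.comp_sub_left x).restrict
  have hKx : ∀ x, (∫ y in Ω, |J (x - y)|) ≤ K := by
    intro x
    have h1 := setIntegral_le_integral (s := Ω) (habs.comp_sub_left x)
      (Filter.Eventually.of_forall fun y => abs_nonneg _)
    rwa [integral_sub_left_eq_self (fun z => |J z|) volume x] at h1
  -- product measure setup
  set P : Measure ((Fin d → ℝ) × (Fin d → ℝ)) := μ.prod μ with hPdef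
  have hac : μ ≪ (volume : Measure (Fin d → ℝ)) :=
    Measure.absolutelyContinuous_of_le Measure.restrict_le_self
  have hT : Measure.QuasiMeasurePreserving
      (fun p : (Fin d → ℝ) × (Fin d → ℝ) => p.1 - p.2) P volume :=
    (quasiMeasurePreserving_sub volume volume).mono (hac.prod hac)
      Measure.AbsolutelyContinuous.rfl
  have hJP : AEStronglyMeasurable (fun p : (Fin d → ℝ) × (Fin d → ℝ) => J (p.1 - p.2)) P :=
    hJ.1.comp_quasiMeasurePreserving hT
  have hJPabs : AEStronglyMeasurable
      (fun p : (Fin d → ℝ) × (Fin d → ℝ) => |J (p.1 - p.2)|) P := by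
    have := hJP.norm
    simpa [Real.norm_eq_abs] using this
  have hψP1 : AEStronglyMeasurable (fun p : (Fin d → ℝ) × (Fin d → ℝ) => ψ p.1) P :=
    (hψm.comp_measurable measurable_fst).aestronglyMeasurable
  have hψP2 : AEStronglyMeasurable (fun p : (Fin d → ℝ) × (Fin d → ℝ) => ψ p.2) P :=
    (hψm.comp_measurable measurable_snd).aestronglyMeasurable
  set f : (Fin d → ℝ) × (Fin d → ℝ) → ℝ := fun p => J (p.1 - p.2) * ψ p.1 * ψ p.2 with hfdef
  have hfm : AEStronglyMeasurable f P := (hJP.mul hψP1).mul hψP2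
  set h₁ : (Fin d → ℝ) × (Fin d → ℝ) → ℝ :=
    fun p => (1 / 2 * ψ p.1 ^ 2) * |J (p.1 - p.2)| with hh₁def
  set h₂ : (Fin d → ℝ) × (Fin d → ℝ) → ℝ :=
    fun p => (1 / 2 * ψ p.2 ^ 2) * |J (p.1 - p.2)| with hh₂def
  have hψP1sq : AEStronglyMeasurable
      (fun p : (Fin d → ℝ) × (Fin d → ℝ) => 1 / 2 * ψ p.1 ^ 2) P :=
    aestronglyMeasurable_const.mul (hψP1.mul hψP1 |>.congr
      (Filter.Eventually.of_forall fun p => by simp only [Pi.mul_apply]; ring))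
  have hψP2sq : AEStronglyMeasurable
      (fun p : (Fin d → ℝ) × (Fin d → ℝ) => 1 / 2 * ψ p.2 ^ 2) P :=
    aestronglyMeasurable_const.mul (hψP2.mul hψP2 |>.congr
      (Filter.Eventually.of_forall fun p => by simp only [Pi.mul_apply]; ring))
  have hh₁m : AEStronglyMeasurable h₁ P := hψP1sq.mul hJPabs
  have hh₂m : AEStronglyMeasurable h₂ P := hψP2sq.mul hJPabs
  have hh₁int : Integrable h₁ P := by
    rw [integrable_prod_iff hh₁m]
    constructor
    · refine Filter.Eventually.of_forall fun x => ?_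
      simpa only [hh₁def] using (hJxint x).const_mul (1 / 2 * ψ x ^ 2)
    · refine Integrable.mono' (hψsq.const_mul (1 / 2 * K)) hh₁m.norm.integral_prod_right' ?_
      refine Filter.Eventually.of_forall fun x => ?_
      have hnn : 0 ≤ ∫ y, ‖h₁ (x, y)‖ ∂μ := integral_nonneg fun y => norm_nonneg _
      rw [Real.norm_eq_abs, abs_of_nonneg hnn]
      have heq : (∫ y, ‖h₁ (x, y)‖ ∂μ) = (1 / 2 * ψ x ^ 2) * ∫ y, |J (x - y)| ∂μ := by
        rw [← integral_const_mul]
        refine integral_congr_ae (Filter.Eventually.of_forall fun y => ?_)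
        simp only [hh₁def, Real.norm_eq_abs, abs_mul, abs_abs]
        rw [abs_of_nonneg (sq_nonneg (ψ x)), abs_of_nonneg (by norm_num : (0:ℝ) ≤ 1 / 2)]
      rw [heq]
      have := mul_le_mul_of_nonneg_left (hKx x) (by positivity : (0:ℝ) ≤ 1 / 2 * ψ x ^ 2)
      calc (1 / 2 * ψ x ^ 2) * ∫ y, |J (x - y)| ∂μ ≤ (1 / 2 * ψ x ^ 2) * K := this
        _ = 1 / 2 * K * ψ x ^ 2 := by ring
  have hevP : ∀ᵐ p ∂P, J (p.2 - p.1) = J (p.1 - p.2) := by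
    have h1 := hT.tendsto_ae.eventually hJeven
    filter_upwards [h1] with p hp
    simpa [neg_sub] using hp
  have hh₂int : Integrable h₂ P := by
    have hsw : Integrable (h₁ ∘ Prod.swap) P := hh₁int.swap
    refine hsw.congr ?_
    filter_upwards [hevP] with p hp
    simp only [Function.comp_apply, hh₁def, hh₂def, Prod.fst_swap, Prod.snd_swap]
    rw [hp]
  have hbound : ∀ p, ‖f p‖ ≤ h₁ p + h₂ p := by
    intro p
    simp only [hfdef, hh₁def, hh₂def, Real.norm_eq_abs, abs_mul]
    nlinarith [abs_nonneg (J (p.1 - p.2)), sq_abs (ψ p.1), sq_abs (ψ p.2),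
      sq_nonneg (|ψ p.1| - |ψ p.2|), abs_nonneg (ψ p.1), abs_nonneg (ψ p.2),
      mul_le_mul_of_nonneg_left
        (by nlinarith [sq_nonneg (|ψ p.1| - |ψ p.2|), sq_abs (ψ p.1), sq_abs (ψ p.2)] :
          |ψ p.1| * |ψ p.2| ≤ 1 / 2 * ψ p.1 ^ 2 + 1 / 2 * ψ p.2 ^ 2)
        (abs_nonneg (J (p.1 - p.2)))]
  have hfint : Integrable f P :=
    (hh₁int.add hh₂int).mono' hfm (Filter.Eventually.of_forall hbound)
  -- the double integral equals the product integral
  have hBeq : (∫ x in Ω, ∫ y in Ω, J (x - y) * φ x * φ y) = ∫ p, f p ∂P := by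
    have hstep : (∫ x in Ω, ∫ y in Ω, J (x - y) * φ x * φ y)
        = ∫ x in Ω, ∫ y in Ω, J (x - y) * ψ x * ψ y := by
      refine integral_congr_ae ?_
      filter_upwards [hφψ] with x hx
      refine integral_congr_ae ?_
      filter_upwards [hφψ] with y hy
      rw [hx, hy]
    rw [hstep, integral_prod f hfint]
  -- bound on the product integral
  have hh₁le : (∫ p, h₁ p ∂P) ≤ 1 / 2 * K * S := by
    rw [integral_prod h₁ hh₁int]
    have hint1 : Integrable (fun x => ∫ y, h₁ (x, y) ∂μ) μ := hh₁int.integral_prod_left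
    have hpt : ∀ x, (∫ y, h₁ (x, y) ∂μ) ≤ 1 / 2 * K * ψ x ^ 2 := by
      intro x
      have heq : (∫ y, h₁ (x, y) ∂μ) = (1 / 2 * ψ x ^ 2) * ∫ y, |J (x - y)| ∂μ := by
        simp only [hh₁def]; exact integral_const_mul _ _
      rw [heq]
      calc (1 / 2 * ψ x ^ 2) * ∫ y, |J (x - y)| ∂μ
          ≤ (1 / 2 * ψ x ^ 2) * K :=
            mul_le_mul_of_nonneg_left (hKx x) (by positivity)
        _ = 1 / 2 * K * ψ x ^ 2 := by ring
    calc (∫ x, ∫ y, h₁ (x, y) ∂μ ∂μ) ≤ ∫ x, 1 / 2 * K * ψ x ^ 2 ∂μ :=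
          integral_mono hint1 (hψsq.const_mul _) hpt
      _ = 1 / 2 * K * S := integral_const_mul _ _
  have hh₂eq : (∫ p, h₂ p ∂P) = ∫ p, h₁ p ∂P := by
    have hswp : (∫ p, h₂ p ∂P) = ∫ p, h₁ p.swap ∂P := by
      refine integral_congr_ae ?_
      filter_upwards [hevP] with p hp
      simp only [hh₁def, hh₂def, Prod.fst_swap, Prod.snd_swap]
      rw [hp]
    rw [hswp, integral_prod_swap h₁]
  have hBle : |∫ p, f p ∂P| ≤ K * S := by
    calc |∫ p, f p ∂P| ≤ ∫ p, ‖f p‖ ∂P := by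
          simpa [Real.norm_eq_abs] using norm_integral_le_integral_norm f (μ := P)
      _ ≤ ∫ p, (h₁ p + h₂ p) ∂P :=
          integral_mono hfint.norm (hh₁int.add hh₂int) hbound
      _ = (∫ p, h₁ p ∂P) + ∫ p, h₂ p ∂P := integral_add hh₁int hh₂int
      _ ≤ 1 / 2 * K * S + 1 / 2 * K * S := by rw [hh₂eq]; linarith
      _ = K * S := by ring
  -- lower bound on ∫ F(φ)
  have hIF : c₁ * S - c₂ * V ≤ ∫ x in Ω, F (φ x) := by
    have hint : Integrable (fun x => c₁ * φ x ^ 2 - c₂) μ :=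
      (hφ2.integrable_sq.const_mul c₁).sub (integrable_const c₂)
    have h1 : (∫ x in Ω, (c₁ * φ x ^ 2 - c₂)) ≤ ∫ x in Ω, F (φ x) :=
      integral_mono hint hFφ fun x => hH3 (φ x)
    have h2 : (∫ x in Ω, (c₁ * φ x ^ 2 - c₂)) = c₁ * S - c₂ * V := by
      rw [integral_sub (hφ2.integrable_sq.const_mul c₁) (integrable_const c₂),
        integral_const_mul, hSφ, integral_const, measureReal_restrict_apply_univ, Measure.real]
      simp [smul_eq_mul, mul_comm, hVdef]
    linarith [h1, h2.symm.le]
  -- nonnegativity of the local term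
  have hA : 0 ≤ ∫ x in Ω, (∫ y in Ω, J (x - y)) * φ x ^ 2 := by
    refine integral_nonneg_of_ae ?_
    filter_upwards [ha] with x hx
    exact mul_nonneg hx (sq_nonneg _)
  -- final arithmetic
  rw [hBeq, hSφ]
  set I : ℝ := ∫ x in Ω, F (φ x)
  set B : ℝ := ∫ p, f p ∂P
  set A : ℝ := ∫ x in Ω, (∫ y in Ω, J (x - y)) * φ x ^ 2
  have hB' : B ≤ K * S := le_of_abs_le hBle
  have h2α : (0:ℝ) ≤ 2 - α := by linarith
  have hmul : (2 - α) * (c₁ * S - c₂ * V) ≤ (2 - α) * I := mul_le_mul_of_nonneg_left hIF h2α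
  have hmul2 : (α + K) * S - (2 - α) * (c₂ * V) ≤ (2 - α) * I := by
    nlinarith [hmul, hkey]
  have : α * (S + I) - c ≤ A + 2 * I - B := by nlinarith [hmul2, hcge, hA, hB']
  linarith
end

section
/- There exist constants c_K > 0 and C ≥ 0 such that for all s, m ∈ ℝ: ((s³ − s) − (m³ − m))·(s − m) ≥ c_K·((s − m)⁴ + (s − m)²·m²) − C·(s − m)². In particular one may take c_K = 1/8 and C = 1. -/
/-- Pointwise estimate for `F'(s) = s³ - s`: there are `c_K > 0` and `C ≥ 0`
(one may take `c_K = 1/8` and `C = 1`) such that for all `s, m`: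
`((s³ - s) - (m³ - m))(s - m) ≥ c_K ((s - m)⁴ + (s - m)² m²) - C (s - m)²`. -/
theorem stmt_15 :
    ∃ cK > (0 : ℝ), ∃ C ≥ (0 : ℝ), (cK = 1 / 8 ∧ C = 1) ∧
      ∀ s m : ℝ,
        ((s ^ 3 - s) - (m ^ 3 - m)) * (s - m) ≥
          cK * ((s - m) ^ 4 + (s - m) ^ 2 * m ^ 2) - C * (s - m) ^ 2 := by
  refine ⟨1/8, by norm_num, 1, by norm_num, ⟨rfl, rfl⟩, fun s m => ?_⟩
  nlinarith [sq_nonneg ((s-m)^2 + 2*(s-m)*m), sq_nonneg ((s-m)*m), sq_nonneg (s-m), sq_nonneg ((s-m)^2), sq_nonneg m, sq_nonneg ((s-m)+m)]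
end
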